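/- For $\kappa, \kappa' \in (0, \pi/2)$, let $Y(\kappa)$ be the $2\times 2$ complex matrix with rows $(1, 1)$ and $(e^{-i\kappa}, e^{i\kappa})$. Then the operator norm satisfies $\|Y(\kappa')^{-1} Y(\kappa)\| \le 1 + \frac{|e^{i\kappa'} - e^{i\kappa}|}{\sin(\kappa')}$. -/

import Mathlib

open Matrix

lemma opnorm_le_two_mul (m : ℝ) (A : Matrix (Fin 2) (Fin 2) ℂ)
    (hA : ∀ i j, ‖A i j‖ ≤ m) :
    ‖Matrix.toEuclideanCLM (𝕜 := ℂ) A‖ ≤ 2 * m := by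
  have hm : 0 ≤ m := le_trans (norm_nonneg _) (hA 0 0)
  apply ContinuousLinearMap.opNorm_le_bound _ (by positivity)
  intro x
  set y := Matrix.toEuclideanCLM (𝕜 := ℂ) A x with hy
  have hyi : ∀ i, y i = A i 0 * x 0 + A i 1 * x 1 := by
    intro i
    have := congrFun (Matrix.ofLp_toEuclideanCLM (𝕜 := ℂ) A x) i
    exact this.trans (by simp [Matrix.mulVec, dotProduct, Fin.sum_univ_two])
  have hxn : ‖x‖ ^ 2 = ‖x 0‖ ^ 2 + ‖x 1‖ ^ 2 := by
    rw [EuclideanSpace.norm_eq, Real.sq_sqrt (by positivity)]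
    simp [Fin.sum_univ_two]
  have hyn : ‖y‖ ^ 2 = ‖y 0‖ ^ 2 + ‖y 1‖ ^ 2 := by
    rw [EuclideanSpace.norm_eq, Real.sq_sqrt (by positivity)]
    simp [Fin.sum_univ_two]
  have hb : ∀ i, ‖y i‖ ≤ m * (‖x 0‖ + ‖x 1‖) := by
    intro i
    rw [hyi i]
    calc ‖A i 0 * x 0 + A i 1 * x 1‖
        ≤ ‖A i 0 * x 0‖ + ‖A i 1 * x 1‖ := norm_add_le _ _
      _ = ‖A i 0‖ * ‖x 0‖ + ‖A i 1‖ * ‖x 1‖ := by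
          simp [_root_.map_mul]
      _ ≤ m * ‖x 0‖ + m * ‖x 1‖ := by
          gcongr <;> [exact hA i 0; exact hA i 1]
      _ = m * (‖x 0‖ + ‖x 1‖) := by ring
  have h0 := hb 0
  have h1 := hb 1
  have hkey : ‖y‖ ^ 2 ≤ (2 * m * ‖x‖) ^ 2 := by
    rw [hyn]
    have hx2 : (2 * m * ‖x‖) ^ 2 = 4 * m ^ 2 * (‖x 0‖ ^ 2 + ‖x 1‖ ^ 2) := by
      rw [mul_pow, mul_pow, hxn]; ring
    rw [hx2]
    nlinarith [norm_nonneg (y 0), norm_nonneg (y 1),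
      norm_nonneg (x 0), norm_nonneg (x 1),
      sq_nonneg (‖x 0‖ - ‖x 1‖)]
  nlinarith [norm_nonneg y, norm_nonneg x, mul_nonneg (mul_nonneg (by norm_num : (0:ℝ) ≤ 2) hm) (norm_nonneg x)]

theorem stmt_4 (κ κ' : ℝ) (hκ : κ ∈ Set.Ioo 0 (Real.pi / 2))
    (hκ' : κ' ∈ Set.Ioo 0 (Real.pi / 2))
    (Y : ℝ → Matrix (Fin 2) (Fin 2) ℂ)
    (hY : ∀ t : ℝ, Y t =
      !![1, 1; Complex.exp (-(t : ℂ) * Complex.I), Complex.exp ((t : ℂ) * Complex.I)]) :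
    ‖Matrix.toEuclideanCLM (𝕜 := ℂ) ((Y κ')⁻¹ * Y κ)‖ ≤
      1 + ‖Complex.exp ((κ' : ℂ) * Complex.I) - Complex.exp ((κ : ℂ) * Complex.I)‖
        / Real.sin κ' := by
  obtain ⟨hκ'0, hκ'2⟩ := hκ'
  have hs : 0 < Real.sin κ' := Real.sin_pos_of_pos_of_lt_pi hκ'0 (by linarith [Real.pi_pos])
  set w' := Complex.exp ((κ' : ℂ) * Complex.I) with hw'
  set v' := Complex.exp (-((κ' : ℂ) * Complex.I)) with hv'
  set w := Complex.exp ((κ : ℂ) * Complex.I) with hw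
  set v := Complex.exp (-((κ : ℂ) * Complex.I)) with hv
  have hv2 : Complex.exp (-(κ : ℂ) * Complex.I) = v := by rw [hv, neg_mul]
  have hv2' : Complex.exp (-(κ' : ℂ) * Complex.I) = v' := by rw [hv', neg_mul]
  set d : ℂ := 2 * (Real.sin κ' : ℂ) * Complex.I with hdd
  have hd : w' - v' = d := by
    rw [hdd, Complex.ofReal_sin, Complex.sin, neg_mul]
    field_simp
    linear_combination (w' - v') * Complex.I_sq
  have hd0 : d ≠ 0 := by
    rw [hdd]
    exact mul_ne_zero (mul_ne_zero two_ne_zero (Complex.ofReal_ne_zero.2 hs.ne')) Complex.I_ne_zero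
  have hconj : v = starRingEnd ℂ w := by
    rw [hw, hv, ← Complex.exp_conj]
    congr 1
    rw [_root_.map_mul, Complex.conj_ofReal, Complex.conj_I]
    ring
  have hconj' : v' = starRingEnd ℂ w' := by
    rw [hw', hv', ← Complex.exp_conj]
    congr 1
    rw [_root_.map_mul, Complex.conj_ofReal, Complex.conj_I]
    ring
  have habsd : ‖d‖ = 2 * Real.sin κ' := by
    rw [hdd, norm_mul, norm_mul, Complex.norm_I, Complex.norm_real, Real.norm_eq_abs, Complex.norm_two,
      abs_of_pos hs, mul_one]
  clear_value w' v' w v d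
  set F : Matrix (Fin 2) (Fin 2) ℂ := !![v' - v, w' - w; v - v', w - w'] with hF
  set E : Matrix (Fin 2) (Fin 2) ℂ := d⁻¹ • F with hE
  set B : Matrix (Fin 2) (Fin 2) ℂ := d⁻¹ • !![w', -1; -v', 1] with hB
  have hM : !![w', -1; -v', 1] * Y κ' = d • (1 : Matrix (Fin 2) (Fin 2) ℂ) := by
    rw [hY]
    ext i j
    fin_cases i <;> fin_cases j <;>
      simp [Matrix.mul_apply, Fin.sum_univ_two, Matrix.one_apply, hv2', ← hv, ← hv', ← hw, ← hw'] <;>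
      first | linear_combination hd | linear_combination -hd | ring1
  have hL : B * Y κ' = 1 := by
    rw [hB, Matrix.smul_mul, hM, smul_smul, inv_mul_cancel₀ hd0, one_smul]
  have hinv : (Y κ')⁻¹ = B := Matrix.inv_eq_left_inv hL
  have hM2 : !![w', -1; -v', 1] * Y κ = d • (1 : Matrix (Fin 2) (Fin 2) ℂ) + F := by
    rw [hY, hF]
    ext i j
    fin_cases i <;> fin_cases j <;>
      simp [Matrix.mul_apply, Fin.sum_univ_two, Matrix.one_apply, hv2, ← hv, ← hv', ← hw, ← hw'] <;>
      first | linear_combination hd | linear_combination -hd | ring1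
  have heq : B * Y κ = 1 + E := by
    rw [hB, hE, Matrix.smul_mul, hM2, smul_add, smul_smul, inv_mul_cancel₀ hd0, one_smul]
  set m : ℝ := ‖w' - w‖ / (2 * Real.sin κ') with hm
  have hkey : ∀ z : ℂ, ‖z‖ = ‖w' - w‖ →
      ‖d⁻¹ * z‖ ≤ m := by
    intro z hz
    rw [norm_mul, norm_inv, habsd, hz, hm, div_eq_inv_mul]
  have habs' : ‖v' - v‖ = ‖w' - w‖ := by
    rw [hconj, hconj', ← map_sub, Complex.norm_conj]
  have hFm : ∀ i j, ‖F i j‖ = ‖w' - w‖ := by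
    intro i j
    fin_cases i <;> fin_cases j <;> simp only [hF] <;>
      first
        | exact habs'
        | rfl
        | (show ‖v - v'‖ = _; rw [norm_sub_rev]; exact habs')
        | (show ‖w - w'‖ = _; exact norm_sub_rev _ _)
  have hEm : ∀ i j, ‖E i j‖ ≤ m := by
    intro i j
    have : E i j = d⁻¹ * F i j := by rw [hE, Matrix.smul_apply, smul_eq_mul]
    rw [this]
    exact hkey _ (hFm i j)
  have hEnorm : ‖Matrix.toEuclideanCLM (𝕜 := ℂ) E‖ ≤ 2 * m :=
    opnorm_le_two_mul m E hEm
  have h2m : 2 * m = ‖w' - w‖ / Real.sin κ' := by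
    rw [hm]; field_simp
  have hsplit : Matrix.toEuclideanCLM (𝕜 := ℂ) ((1 + E : Matrix (Fin 2) (Fin 2) ℂ)) =
      Matrix.toEuclideanCLM (𝕜 := ℂ) (1 : Matrix (Fin 2) (Fin 2) ℂ) +
      Matrix.toEuclideanCLM (𝕜 := ℂ) E := _root_.map_add _ _ _
  have hone : Matrix.toEuclideanCLM (𝕜 := ℂ) (1 : Matrix (Fin 2) (Fin 2) ℂ) = 1 :=
    _root_.map_one _
  have honen : ‖(1 : EuclideanSpace ℂ (Fin 2) →L[ℂ] EuclideanSpace ℂ (Fin 2))‖ ≤ 1 := by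
    rw [ContinuousLinearMap.one_def]
    exact ContinuousLinearMap.norm_id_le
  calc ‖Matrix.toEuclideanCLM (𝕜 := ℂ) ((Y κ')⁻¹ * Y κ)‖
      = ‖Matrix.toEuclideanCLM (𝕜 := ℂ) ((1 + E : Matrix (Fin 2) (Fin 2) ℂ))‖ := by rw [hinv, heq]
    _ ≤ ‖Matrix.toEuclideanCLM (𝕜 := ℂ) (1 : Matrix (Fin 2) (Fin 2) ℂ)‖ +
        ‖Matrix.toEuclideanCLM (𝕜 := ℂ) E‖ := by rw [hsplit]; exact norm_add_le _ _
    _ ≤ 1 + 2 * m := by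
        refine add_le_add ?_ hEnorm
        rw [hone]; exact honen
    _ = 1 + ‖w' - w‖ / Real.sin κ' := by rw [h2m]
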